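/- Fix a graded system of Hilbert spaces with product ∘. Let σ, σ', ρ, ρ', s, s' ∈ ℝ with σ < σ', and define two weight families u₀ = w₀ = 1, w_n = (n!)^σ·2^{ρn}·(1 + n)^s and u_n = (n!)^{σ'}·2^{ρ'n}·(1 + n)^{s'} for n ≥ 1. Then there exists a constant γ > 0 such that for all elements a, b of the algebra, ‖a ∘ b‖_w ≤ γ·‖a‖_u·‖b‖_u. -/

import Mathlib

set_option maxHeartbeats 1000000

open Finset Real


/-! A graded system of Hilbert spaces: a family `(E n)_{n ≥ 1}` of real inner product spaces
together with bilinear maps `mul p q : E p →ₗ E q →ₗ E (p+q)`.  An element of the associated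
algebra is a pair `(a₀, (a n)_{n ≥ 1})` with `a₀ : ℝ`, `a n : E n`, all but finitely many `a n`
zero (the component `a 0` is unused dead data).  -/

/-- The degree-`n` component (`n ≥ 1`) of the product of the elements `(a₀, a)` and `(b₀, b)`:
`c n = a₀ • b n + b₀ • a n + ∑_{p+q=n, p,q ≥ 1} a p ∘ b q`. -/
noncomputable def gradedMul {E : ℕ → Type*} [∀ n, NormedAddCommGroup (E n)]
    [∀ n, InnerProductSpace ℝ (E n)]
    (mul : ∀ p q : ℕ, E p →ₗ[ℝ] E q →ₗ[ℝ] E (p + q))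
    (a₀ : ℝ) (a : ∀ n, E n) (b₀ : ℝ) (b : ∀ n, E n) (n : ℕ) : E n :=
  a₀ • b n + b₀ • a n +
    ∑ p ∈ Finset.Ioo 0 n,
      if h : p + (n - p) = n then cast (congrArg E h) (mul p (n - p) (a p) (b (n - p))) else 0

/-- The weighted Hilbert norm `‖a‖_w = √(a₀² + ∑_{n ≥ 1} w n · ‖a n‖²)` (the weight `w 0 = 1`
of the scalar component is built in). -/
noncomputable def wnorm {E : ℕ → Type*} [∀ n, NormedAddCommGroup (E n)]
    (w : ℕ → ℝ) (a₀ : ℝ) (a : ∀ n, E n) : ℝ :=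
  Real.sqrt (a₀ ^ 2 + ∑' n : ℕ, w (n + 1) * ‖a (n + 1)‖ ^ 2)

/-- The weight family `w n (σ, ρ, s) = (n!)^σ · 2^(ρn) · (1+n)^s` on positive integers,
with real exponents (real powers). -/
noncomputable def wgt (σ ρ s : ℝ) (n : ℕ) : ℝ :=
  ((n.factorial : ℝ)) ^ σ * (2 : ℝ) ^ (ρ * n) * (1 + (n : ℝ)) ^ s

/-- Norm estimate (`n.11a`): for `σ < σ'` and arbitrary `ρ, ρ', s, s'`, with the weight
families `w n = (n!)^σ·2^(ρn)·(1+n)^s` and `u n = (n!)^σ'·2^(ρ'n)·(1+n)^s'` (`n ≥ 1`,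
`w 0 = u 0 = 1`), there is a constant `γ > 0` such that the product of the algebra satisfies
`‖a ∘ b‖_w ≤ γ·‖a‖_u·‖b‖_u` for all elements `a`, `b`. -/

private lemma wgt_pos (σ ρ s : ℝ) (n : ℕ) : 0 < wgt σ ρ s n := by
  have h1 : (0:ℝ) < n.factorial := by exact_mod_cast n.factorial_pos
  have h3 : (0:ℝ) < 1 + n := by positivity
  exact mul_pos (mul_pos (Real.rpow_pos_of_pos h1 _) (Real.rpow_pos_of_pos two_pos _))
    (Real.rpow_pos_of_pos h3 _)

private lemma wgt_zero (σ ρ s : ℝ) : wgt σ ρ s 0 = 1 := by simp [wgt]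

private noncomputable def nseq {E : ℕ → Type*} [∀ n, NormedAddCommGroup (E n)]
    (a₀ : ℝ) (a : ∀ n, E n) (p : ℕ) : ℝ :=
  if p = 0 then |a₀| else ‖a p‖

private lemma nseq_nonneg {E : ℕ → Type*} [∀ n, NormedAddCommGroup (E n)]
    (a₀ : ℝ) (a : ∀ n, E n) (p : ℕ) : 0 ≤ nseq a₀ a p := by
  unfold nseq; split
  · exact abs_nonneg _
  · exact norm_nonneg _

private lemma cast_norm_eq {E : ℕ → Type*} [∀ n, NormedAddCommGroup (E n)]
    {m n : ℕ} (h : m = n) (v : E m) : ‖cast (congrArg E h) v‖ = ‖v‖ := by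
  subst h; rw [cast_eq]

private lemma cast_zero_eq {E : ℕ → Type*} [∀ n, NormedAddCommGroup (E n)]
    {m n : ℕ} (h : m = n) : cast (congrArg E h) (0 : E m) = (0 : E n) := by
  subst h; rw [cast_eq]

private lemma gradedMul_eq_zero {E : ℕ → Type*} [∀ n, NormedAddCommGroup (E n)]
    [∀ n, InnerProductSpace ℝ (E n)]
    (mul : ∀ p q : ℕ, E p →ₗ[ℝ] E q →ₗ[ℝ] E (p + q))
    (a₀ : ℝ) (a : ∀ n, E n) (b₀ : ℝ) (b : ∀ n, E n) (Na Nb : ℕ)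
    (ha : ∀ m, Na ≤ m → a m = 0) (hb : ∀ m, Nb ≤ m → b m = 0)
    {n : ℕ} (h : 2 * max Na Nb + 1 ≤ n) :
    gradedMul mul a₀ a b₀ b n = 0 := by
  have han : a n = 0 := ha n (by omega)
  have hbn : b n = 0 := hb n (by omega)
  show a₀ • b n + b₀ • a n + _ = 0
  rw [han, hbn, smul_zero, smul_zero, zero_add, zero_add]
  apply Finset.sum_eq_zero
  intro p hp
  rw [Finset.mem_Ioo] at hp
  have hpn : p + (n - p) = n := by omega
  rw [dif_pos hpn]
  rcases le_or_gt Na p with h1 | h1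
  · rw [ha p h1]
    simp only [map_zero, LinearMap.zero_apply]
    exact cast_zero_eq hpn
  · have h2 : Nb ≤ n - p := by omega
    rw [hb _ h2]
    simp only [map_zero]
    exact cast_zero_eq hpn

private lemma gradedMul_norm_le {E : ℕ → Type*} [∀ n, NormedAddCommGroup (E n)]
    [∀ n, InnerProductSpace ℝ (E n)]
    (mul : ∀ p q : ℕ, E p →ₗ[ℝ] E q →ₗ[ℝ] E (p + q))
    (hmul : ∀ p q : ℕ, 1 ≤ p → 1 ≤ q → ∀ (x : E p) (y : E q), ‖mul p q x y‖ ≤ ‖x‖ * ‖y‖)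
    (a₀ : ℝ) (a : ∀ n, E n) (b₀ : ℝ) (b : ∀ n, E n) (n : ℕ) (hn : 1 ≤ n) :
    ‖gradedMul mul a₀ a b₀ b n‖
      ≤ ∑ p ∈ Finset.range (n+1), nseq a₀ a p * nseq b₀ b (n - p) := by
  have hn0 : n ≠ 0 := by omega
  have hsplit : Finset.range (n+1) = insert 0 (insert n (Finset.Ioo 0 n)) := by
    ext x
    simp only [Finset.mem_range, Finset.mem_insert, Finset.mem_Ioo]
    omega
  have h0 : (0:ℕ) ∉ insert n (Finset.Ioo 0 n) := by
    simp only [Finset.mem_insert, Finset.mem_Ioo]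
    omega
  have hnn : n ∉ Finset.Ioo 0 n := by simp
  rw [hsplit, Finset.sum_insert h0, Finset.sum_insert hnn]
  have e0 : nseq a₀ a 0 * nseq b₀ b (n - 0) = |a₀| * ‖b n‖ := by
    simp [nseq, hn0]
  have en : nseq a₀ a n * nseq b₀ b (n - n) = ‖a n‖ * |b₀| := by
    simp [nseq, hn0, mul_comm]
  rw [e0, en]
  calc ‖gradedMul mul a₀ a b₀ b n‖
      ≤ ‖a₀ • b n‖ + ‖b₀ • a n‖ + ‖∑ p ∈ Finset.Ioo 0 n,
          if h : p + (n - p) = n then cast (congrArg E h) (mul p (n - p) (a p) (b (n - p)))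
          else 0‖ := norm_add₃_le
    _ ≤ |a₀| * ‖b n‖ + (‖a n‖ * |b₀| + ∑ p ∈ Finset.Ioo 0 n, nseq a₀ a p * nseq b₀ b (n - p)) := by
        have hs1 : ‖a₀ • b n‖ = |a₀| * ‖b n‖ := by
          rw [norm_smul, Real.norm_eq_abs]
        have hs2 : ‖b₀ • a n‖ = ‖a n‖ * |b₀| := by
          rw [norm_smul, Real.norm_eq_abs, mul_comm]
        have hs3 : ‖∑ p ∈ Finset.Ioo 0 n,
            if h : p + (n - p) = n then cast (congrArg E h) (mul p (n - p) (a p) (b (n - p)))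
            else 0‖ ≤ ∑ p ∈ Finset.Ioo 0 n, nseq a₀ a p * nseq b₀ b (n - p) := by
          refine le_trans (norm_sum_le _ _) (Finset.sum_le_sum ?_)
          intro p hp
          rw [Finset.mem_Ioo] at hp
          have hpn : p + (n - p) = n := by omega
          have hp0 : p ≠ 0 := by omega
          have hq0 : n - p ≠ 0 := by omega
          rw [dif_pos hpn, cast_norm_eq hpn]
          have := hmul p (n - p) (by omega) (by omega) (a p) (b (n - p))
          calc ‖mul p (n-p) (a p) (b (n-p))‖ ≤ ‖a p‖ * ‖b (n-p)‖ := this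
            _ = nseq a₀ a p * nseq b₀ b (n - p) := by simp [nseq, hp0, hq0]
        rw [hs1, hs2]
        linarith
    _ = |a₀| * ‖b n‖ + (‖a n‖ * |b₀| + ∑ p ∈ Finset.Ioo 0 n, nseq a₀ a p * nseq b₀ b (n - p)) := rfl

private lemma cs_step (C : ℝ) (hC0 : 0 ≤ C) (U : ℕ → ℝ) (hU : ∀ k, 0 < U k) (W : ℝ)
    (hW : 0 ≤ W) (n : ℕ) (x y : ℕ → ℝ) (hx : ∀ p, 0 ≤ x p) (hy : ∀ q, 0 ≤ y q)
    (hC : ∀ p, p ≤ n → W * (1 + (n:ℝ)) ≤ C * (U p * U (n-p)))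
    (z : ℝ) (hz : 0 ≤ z) (hzle : z ≤ ∑ p ∈ Finset.range (n+1), x p * y (n-p)) :
    W * z ^ 2 ≤ C * ∑ p ∈ Finset.range (n+1), (U p * x p ^ 2) * (U (n-p) * y (n-p) ^ 2) := by
  have hUpq : ∀ p : ℕ, (0:ℝ) < U p * U (n-p) := fun p => mul_pos (hU p) (hU (n-p))
  have key := Finset.sum_mul_sq_le_sq_mul_sq (Finset.range (n+1))
    (fun p => Real.sqrt ((U p * U (n-p))⁻¹))
    (fun p => Real.sqrt (U p * U (n-p)) * (x p * y (n-p)))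
  have h1 : ∀ p ∈ Finset.range (n+1),
      Real.sqrt ((U p * U (n-p))⁻¹) * (Real.sqrt (U p * U (n-p)) * (x p * y (n-p)))
        = x p * y (n-p) := by
    intro p _
    rw [Real.sqrt_inv, ← mul_assoc, inv_mul_cancel₀ (ne_of_gt (Real.sqrt_pos.mpr (hUpq p))),
      one_mul]
  have h2 : ∀ p ∈ Finset.range (n+1),
      (Real.sqrt ((U p * U (n-p))⁻¹)) ^ 2 = (U p * U (n-p))⁻¹ := by
    intro p _
    exact Real.sq_sqrt (inv_pos.mpr (hUpq p)).le
  have h3 : ∀ p ∈ Finset.range (n+1),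
      (Real.sqrt (U p * U (n-p)) * (x p * y (n-p))) ^ 2
        = (U p * x p ^ 2) * (U (n-p) * y (n-p) ^ 2) := by
    intro p _
    rw [mul_pow, Real.sq_sqrt (hUpq p).le]
    ring
  rw [Finset.sum_congr rfl h1, Finset.sum_congr rfl h2, Finset.sum_congr rfl h3] at key
  have hg0 : 0 ≤ ∑ p ∈ Finset.range (n+1), (U p * x p ^ 2) * (U (n-p) * y (n-p) ^ 2) := by
    apply Finset.sum_nonneg
    intro p _
    have := (hU p).le
    have := (hU (n-p)).le
    have := sq_nonneg (x p)
    have := sq_nonneg (y (n-p))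
    positivity
  have hn1 : (0:ℝ) < 1 + (n:ℝ) := by positivity
  have hWinv : W * ∑ p ∈ Finset.range (n+1), (U p * U (n-p))⁻¹ ≤ C := by
    rw [Finset.mul_sum]
    have hterm : ∀ p ∈ Finset.range (n+1), W * (U p * U (n-p))⁻¹ ≤ C / (1 + (n:ℝ)) := by
      intro p hp
      rw [Finset.mem_range] at hp
      rw [← div_eq_mul_inv, div_le_div_iff₀ (hUpq p) hn1]
      exact hC p (by omega)
    calc ∑ p ∈ Finset.range (n+1), W * (U p * U (n-p))⁻¹
        ≤ ∑ _p ∈ Finset.range (n+1), C / (1 + (n:ℝ)) := Finset.sum_le_sum hterm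
      _ = C := by
          rw [Finset.sum_const, Finset.card_range, nsmul_eq_mul]
          field_simp
          push_cast
          ring
  calc W * z ^ 2 ≤ W * (∑ p ∈ Finset.range (n+1), x p * y (n-p)) ^ 2 := by
        apply mul_le_mul_of_nonneg_left _ hW
        apply pow_le_pow_left₀ hz hzle
    _ ≤ W * ((∑ p ∈ Finset.range (n+1), (U p * U (n-p))⁻¹)
          * ∑ p ∈ Finset.range (n+1), (U p * x p ^ 2) * (U (n-p) * y (n-p) ^ 2)) :=
        mul_le_mul_of_nonneg_left key hW
    _ = (W * ∑ p ∈ Finset.range (n+1), (U p * U (n-p))⁻¹)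
          * ∑ p ∈ Finset.range (n+1), (U p * x p ^ 2) * (U (n-p) * y (n-p) ^ 2) := by ring
    _ ≤ C * ∑ p ∈ Finset.range (n+1), (U p * x p ^ 2) * (U (n-p) * y (n-p) ^ 2) :=
        mul_le_mul_of_nonneg_right hWinv hg0

private lemma wgt_eq_exp (σ ρ s : ℝ) (n : ℕ) :
    wgt σ ρ s n
      = Real.exp (Real.log n.factorial * σ + Real.log 2 * (ρ * n) + Real.log (1 + n) * s) := by
  have h1 : (0:ℝ) < n.factorial := by exact_mod_cast n.factorial_pos
  have h3 : (0:ℝ) < 1 + n := by positivity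
  rw [wgt, Real.rpow_def_of_pos h1, Real.rpow_def_of_pos two_pos, Real.rpow_def_of_pos h3,
    ← Real.exp_add, ← Real.exp_add]

private lemma choose_le_two_pow' {n p : ℕ} (h : p ≤ n) : n.choose p ≤ 2 ^ n :=
  calc n.choose p ≤ ∑ m ∈ Finset.range (n+1), n.choose m :=
        Finset.single_le_sum (fun _ _ => Nat.zero_le _) (Finset.mem_range.mpr (Nat.lt_succ_of_le h))
    _ = 2 ^ n := Nat.sum_range_choose n

private lemma poly_le_geom {t B : ℝ} (_ht : 0 ≤ t) (hB : 2 ≤ B) :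
    ∃ C : ℝ, 0 < C ∧ ∀ n : ℕ, (1 + (n:ℝ)) ^ t ≤ C * B ^ (n:ℝ) := by
  have hB1 : (1:ℝ) < B := by linarith
  have h0 : Filter.Tendsto (fun n : ℕ => (n:ℝ) ^ (⌈t⌉₊) / B ^ n) Filter.atTop (nhds 0) :=
    tendsto_pow_const_div_const_pow_of_one_lt _ hB1
  have h1 : Filter.Tendsto (fun n : ℕ => ((n+1 : ℕ):ℝ) ^ (⌈t⌉₊) / B ^ (n+1) * B)
      Filter.atTop (nhds 0) := by
    simpa using (h0.comp (Filter.tendsto_add_atTop_nat 1)).mul_const B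
  obtain ⟨C0, hC0⟩ := h1.bddAbove_range
  refine ⟨max C0 1, by positivity, fun n => ?_⟩
  have hBn : (0:ℝ) < B ^ n := by positivity
  have key : ((n+1 : ℕ):ℝ) ^ (⌈t⌉₊) / B ^ (n+1) * B ≤ max C0 1 :=
    le_trans (hC0 (Set.mem_range_self n)) (le_max_left _ _)
  have heq : ((n+1 : ℕ):ℝ) ^ (⌈t⌉₊) / B ^ (n+1) * B = (1 + (n:ℝ)) ^ (⌈t⌉₊) / B ^ n := by
    push_cast
    rw [pow_succ]
    field_simp
    ring
  rw [heq, div_le_iff₀ hBn] at key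
  calc (1 + (n:ℝ)) ^ t ≤ (1 + (n:ℝ)) ^ ((⌈t⌉₊ : ℕ) : ℝ) :=
        Real.rpow_le_rpow_of_exponent_le (by simp [Nat.cast_nonneg]) (Nat.le_ceil t)
    _ = (1 + (n:ℝ)) ^ (⌈t⌉₊ : ℕ) := Real.rpow_natCast _ _
    _ ≤ max C0 1 * B ^ n := key
    _ = max C0 1 * B ^ (n:ℝ) := by rw [Real.rpow_natCast]

private lemma weight_bound (σ σ' ρ ρ' s s' : ℝ) (hσ : σ < σ') :
    ∃ C : ℝ, 1 ≤ C ∧ ∀ n : ℕ, 1 ≤ n → ∀ p, p ≤ n →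
      wgt σ ρ s n * (1 + (n:ℝ)) ≤ C * (wgt σ' ρ' s' p * wgt σ' ρ' s' (n - p)) := by
  have hδ : 0 < σ' - σ := by linarith
  set δ : ℝ := σ' - σ with hδdef
  set t : ℝ := |s| + 2 * |s'| + 1 with htdef
  set e : ℝ := |σ| + |ρ - ρ'| + 1 with hedef
  have ht0 : 0 ≤ t := by
    have := abs_nonneg s; have := abs_nonneg s'; rw [htdef]; linarith
  have he1 : 1 ≤ e := by
    have := abs_nonneg σ; have := abs_nonneg (ρ - ρ'); rw [hedef]; linarith
  set g : ℕ → ℝ := fun n =>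
    (1 + (n:ℝ)) ^ t * (2:ℝ) ^ (e * (n:ℝ)) * ((((n+1)/2).factorial : ℝ)) ^ (-δ) with hgdef
  obtain ⟨C, hC1, hCg⟩ : ∃ C : ℝ, 1 ≤ C ∧ ∀ n : ℕ, g n ≤ C := by
    set B : ℝ := (2:ℝ) ^ e with hBdef
    have hB2 : (2:ℝ) ≤ B := by
      rw [hBdef]
      calc (2:ℝ) = (2:ℝ) ^ (1:ℝ) := (Real.rpow_one 2).symm
        _ ≤ (2:ℝ) ^ e := Real.rpow_le_rpow_of_exponent_le one_le_two he1
    have hB0 : (0:ℝ) < B := by linarith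
    obtain ⟨C', hC'0, hC'⟩ := poly_le_geom ht0 hB2
    set R : ℝ := B ^ ((4:ℝ)/δ) with hRdef
    have hR1 : (1:ℝ) ≤ R := Real.one_le_rpow (by linarith) (by positivity)
    have hR0 : (0:ℝ) ≤ R := by linarith
    set Ec : ℝ := Real.exp R ^ δ with hEcdef
    have hEc0 : (0:ℝ) < Ec := Real.rpow_pos_of_pos (Real.exp_pos R) δ
    refine ⟨max 1 (C' * Ec), le_max_left _ _, fun n => ?_⟩
    have hfac : (0:ℝ) < (((n+1)/2).factorial : ℝ) := by exact_mod_cast Nat.factorial_pos _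
    have hkn : (2:ℝ) * (n:ℝ) ≤ 4 * ((((n+1)/2 : ℕ)):ℝ) := by
      have h : n ≤ 2 * ((n+1)/2) := by omega
      have h' : (n:ℝ) ≤ 2 * ((((n+1)/2 : ℕ)):ℝ) := by exact_mod_cast h
      linarith
    have h1 : R ^ ((n+1)/2 : ℕ) ≤ Real.exp R * (((n+1)/2).factorial : ℝ) := by
      have h := Real.pow_div_factorial_le_exp (x := R) hR0 ((n+1)/2)
      rwa [div_le_iff₀ hfac] at h
    have hpow0 : (0:ℝ) < R ^ ((n+1)/2:ℕ) / Real.exp R := by positivity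
    have h2 : ((((n+1)/2).factorial : ℝ)) ^ (-δ) ≤ (R ^ ((n+1)/2:ℕ) / Real.exp R) ^ (-δ) := by
      refine Real.rpow_le_rpow_of_nonpos hpow0 ?_ (by linarith)
      rw [div_le_iff₀ (Real.exp_pos R)]
      linarith [h1]
    have h3 : (R ^ ((n+1)/2:ℕ) / Real.exp R) ^ (-δ) = (R ^ ((n+1)/2:ℕ)) ^ (-δ) * Ec := by
      rw [Real.div_rpow (by positivity) (Real.exp_pos R).le,
        show (Real.exp R) ^ (-δ) = ((Real.exp R) ^ δ)⁻¹ from Real.rpow_neg (Real.exp_pos R).le δ,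
        div_eq_mul_inv, inv_inv, hEcdef]
    have h4 : (R ^ ((n+1)/2:ℕ)) ^ (-δ) ≤ (2:ℝ) ^ (-(2 * e * (n:ℝ))) := by
      have heq : (R ^ ((n+1)/2:ℕ)) ^ (-δ)
          = (2:ℝ) ^ (e * (((4:ℝ)/δ) * (((((n+1)/2:ℕ)):ℝ) * (-δ)))) := by
        rw [← Real.rpow_natCast R ((n+1)/2), ← Real.rpow_mul hR0, hRdef,
          ← Real.rpow_mul hB0.le, hBdef, ← Real.rpow_mul (by norm_num : (0:ℝ) ≤ 2)]
      rw [heq]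
      apply Real.rpow_le_rpow_of_exponent_le one_le_two
      have hδne : δ ≠ 0 := ne_of_gt hδ
      have hee : e * (((4:ℝ)/δ) * (((((n+1)/2:ℕ)):ℝ) * (-δ)))
          = -(4 * e * ((((n+1)/2:ℕ)):ℝ)) := by
        field_simp
      rw [hee]
      have he0 : (0:ℝ) ≤ e := by linarith
      nlinarith [mul_le_mul_of_nonneg_left hkn he0]
    have h5 : g n ≤ (C' * B ^ (n:ℝ)) * (2:ℝ) ^ (e * (n:ℝ)) * ((2:ℝ) ^ (-(2*e*(n:ℝ))) * Ec) := by
      have hg2 : ((((n+1)/2).factorial : ℝ)) ^ (-δ) ≤ (2:ℝ) ^ (-(2*e*(n:ℝ))) * Ec :=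
        le_trans h2 (by rw [h3]; exact mul_le_mul_of_nonneg_right h4 (Real.rpow_nonneg (by positivity) _))
      have hg1 : (1+(n:ℝ))^t ≤ C' * B ^ (n:ℝ) := hC' n
      refine mul_le_mul (mul_le_mul hg1 le_rfl (by positivity) ?_) hg2 (by positivity) ?_
      · positivity
      · positivity
    have h6 : (C' * B ^ (n:ℝ)) * (2:ℝ) ^ (e * (n:ℝ)) * ((2:ℝ) ^ (-(2*e*(n:ℝ))) * Ec)
        = C' * Ec := by
      have key : (2:ℝ) ^ (e*(n:ℝ)) * (2:ℝ) ^ (e*(n:ℝ)) * (2:ℝ) ^ (-(2*e*(n:ℝ))) = 1 := by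
        rw [← Real.rpow_add two_pos, ← Real.rpow_add two_pos,
          show e*(n:ℝ) + e*(n:ℝ) + -(2*e*(n:ℝ)) = 0 by ring, Real.rpow_zero]
      rw [hBdef, ← Real.rpow_mul (by norm_num : (0:ℝ) ≤ 2)]
      linear_combination (C' * Ec) * key
    calc g n ≤ _ := h5
      _ = C' * Ec := h6
      _ ≤ max 1 (C' * Ec) := le_max_right _ _
  refine ⟨C, hC1, fun n hn p hp => ?_⟩
  have hq : n - p + p = n := by omega
  -- positivity facts
  have hn1 : (0:ℝ) < 1 + (n:ℝ) := by positivity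
  have hp1 : (0:ℝ) < 1 + (p:ℝ) := by positivity
  have hq1 : (0:ℝ) < 1 + ((n-p : ℕ):ℝ) := by positivity
  have hfn : (0:ℝ) < (n.factorial : ℝ) := by exact_mod_cast n.factorial_pos
  have hfp : (0:ℝ) < (p.factorial : ℝ) := by exact_mod_cast p.factorial_pos
  have hfq : (0:ℝ) < ((n-p).factorial : ℝ) := by exact_mod_cast (n-p).factorial_pos
  have hfk : (0:ℝ) < ((((n+1)/2).factorial : ℕ) : ℝ) := by exact_mod_cast Nat.factorial_pos _
  have hch0 : 0 < n.choose p := Nat.choose_pos hp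
  have hchR : (1:ℝ) ≤ (n.choose p : ℝ) := by exact_mod_cast hch0
  -- factorial facts
  have hkpq : (((n+1)/2).factorial : ℕ) ≤ p.factorial * (n-p).factorial := by
    have h1 : (n+1)/2 ≤ max p (n-p) := by
      rcases Nat.le_total p (n-p) with h | h
      · rw [Nat.max_eq_right h]; omega
      · rw [Nat.max_eq_left h]; omega
    have h2 : (((n+1)/2).factorial : ℕ) ≤ (max p (n-p)).factorial := Nat.factorial_le h1
    refine le_trans h2 ?_
    rcases Nat.le_total p (n-p) with h | h
    · rw [Nat.max_eq_right h]
      exact Nat.le_mul_of_pos_left _ (Nat.factorial_pos p)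
    · rw [Nat.max_eq_left h]
      exact Nat.le_mul_of_pos_right _ (Nat.factorial_pos (n-p))
  have hchf : (n.factorial : ℝ) = (n.choose p : ℝ) * ((p.factorial : ℝ) * ((n-p).factorial : ℝ)) := by
    have h : n.choose p * p.factorial * (n-p).factorial = n.factorial :=
      Nat.choose_mul_factorial_mul_factorial hp
    have h2 : n.factorial = n.choose p * (p.factorial * (n-p).factorial) := by rw [← h]; ring
    exact_mod_cast h2
  -- log facts
  have hLn : Real.log (n.factorial : ℝ)
      = Real.log (n.choose p : ℝ) + (Real.log (p.factorial : ℝ) + Real.log ((n-p).factorial : ℝ)) := by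
    rw [hchf, Real.log_mul (by positivity) (by positivity), Real.log_mul (ne_of_gt hfp) (ne_of_gt hfq)]
  have hLc0 : 0 ≤ Real.log (n.choose p : ℝ) := Real.log_nonneg hchR
  have hLc2 : Real.log (n.choose p : ℝ) ≤ (n:ℝ) * Real.log 2 := by
    have h1 : (n.choose p : ℝ) ≤ (2:ℝ) ^ (n:ℕ) := by exact_mod_cast choose_le_two_pow' hp
    calc Real.log (n.choose p : ℝ) ≤ Real.log ((2:ℝ) ^ (n:ℕ)) := by
          apply Real.log_le_log (by positivity) h1
      _ = (n:ℝ) * Real.log 2 := by rw [Real.log_pow]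
  have hLk : Real.log ((((n+1)/2).factorial : ℕ) : ℝ)
      ≤ Real.log (p.factorial : ℝ) + Real.log ((n-p).factorial : ℝ) := by
    rw [← Real.log_mul (ne_of_gt hfp) (ne_of_gt hfq)]
    apply Real.log_le_log hfk
    exact_mod_cast hkpq
  have hMn0 : 0 ≤ Real.log (1 + (n:ℝ)) := Real.log_nonneg (by norm_num)
  have hMp0 : 0 ≤ Real.log (1 + (p:ℝ)) := Real.log_nonneg (by norm_num)
  have hMq0 : 0 ≤ Real.log (1 + ((n-p:ℕ):ℝ)) := Real.log_nonneg (by norm_num)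
  have hMpn : Real.log (1 + (p:ℝ)) ≤ Real.log (1 + (n:ℝ)) := by
    apply Real.log_le_log hp1
    have : (p:ℝ) ≤ (n:ℝ) := by exact_mod_cast hp
    linarith
  have hMqn : Real.log (1 + ((n-p:ℕ):ℝ)) ≤ Real.log (1 + (n:ℝ)) := by
    apply Real.log_le_log hq1
    have : ((n-p:ℕ):ℝ) ≤ (n:ℝ) := by exact_mod_cast Nat.sub_le n p
    linarith
  have hL2 : 0 ≤ Real.log 2 := Real.log_nonneg one_le_two
  have hcast : (p:ℝ) + ((n-p:ℕ):ℝ) = (n:ℝ) := by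
    have h : p + (n - p) = n := by omega
    exact_mod_cast h
  -- exp forms
  have hL : wgt σ ρ s n * (1 + (n:ℝ))
      = Real.exp ((Real.log (n.factorial : ℝ) * σ + Real.log 2 * (ρ * n)
          + Real.log (1 + (n:ℝ)) * s) + Real.log (1 + (n:ℝ))) := by
    rw [Real.exp_add, Real.exp_log hn1, ← wgt_eq_exp]
  have hgn : g n = Real.exp (Real.log (1 + (n:ℝ)) * t + Real.log 2 * (e * (n:ℝ))
      + Real.log ((((n+1)/2).factorial : ℕ) : ℝ) * (-δ)) := by
    show (1 + (n:ℝ)) ^ t * (2:ℝ) ^ (e * (n:ℝ)) * ((((n+1)/2).factorial : ℝ)) ^ (-δ) = _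
    rw [Real.rpow_def_of_pos hn1, Real.rpow_def_of_pos two_pos, Real.rpow_def_of_pos hfk,
      ← Real.exp_add, ← Real.exp_add]
  have hR : g n * (wgt σ' ρ' s' p * wgt σ' ρ' s' (n-p))
      = Real.exp ((Real.log (1 + (n:ℝ)) * t + Real.log 2 * (e * (n:ℝ))
          + Real.log ((((n+1)/2).factorial : ℕ) : ℝ) * (-δ))
        + ((Real.log (p.factorial : ℝ) * σ' + Real.log 2 * (ρ' * p)
            + Real.log (1 + (p:ℝ)) * s')
          + (Real.log ((n-p).factorial : ℝ) * σ' + Real.log 2 * (ρ' * (n-p:ℕ))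
            + Real.log (1 + ((n-p:ℕ):ℝ)) * s'))) := by
    rw [hgn, wgt_eq_exp σ' ρ' s' p, wgt_eq_exp σ' ρ' s' (n-p), ← Real.exp_add, ← Real.exp_add]
  rw [hL]
  calc Real.exp _ ≤ g n * (wgt σ' ρ' s' p * wgt σ' ρ' s' (n-p)) := by
        rw [hR]
        apply Real.exp_le_exp.mpr
        -- linear arithmetic in log atoms
        have hΔ1 : σ * Real.log (n.choose p : ℝ) ≤ |σ| * ((n:ℝ) * Real.log 2) := by
          calc σ * Real.log (n.choose p : ℝ) ≤ |σ| * Real.log (n.choose p : ℝ) :=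
                mul_le_mul_of_nonneg_right (le_abs_self σ) hLc0
            _ ≤ |σ| * ((n:ℝ) * Real.log 2) := mul_le_mul_of_nonneg_left hLc2 (abs_nonneg σ)
        have hΔ2 : δ * Real.log ((((n+1)/2).factorial : ℕ) : ℝ)
            ≤ δ * (Real.log (p.factorial : ℝ) + Real.log ((n-p).factorial : ℝ)) :=
          mul_le_mul_of_nonneg_left hLk hδ.le
        have hnL2 : 0 ≤ (n:ℝ) * Real.log 2 := mul_nonneg (Nat.cast_nonneg n) hL2
        have hΔ3 : (ρ - ρ') * ((n:ℝ) * Real.log 2) ≤ |ρ - ρ'| * ((n:ℝ) * Real.log 2) :=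
          mul_le_mul_of_nonneg_right (le_abs_self _) hnL2
        have hΔ4 : -(|s'| * Real.log (1 + (n:ℝ))) ≤ s' * Real.log (1 + (p:ℝ)) := by
          have a1 : -s' * Real.log (1 + (p:ℝ)) ≤ |s'| * Real.log (1 + (p:ℝ)) :=
            mul_le_mul_of_nonneg_right (neg_le_abs s') hMp0
          have a2 : |s'| * Real.log (1 + (p:ℝ)) ≤ |s'| * Real.log (1 + (n:ℝ)) :=
            mul_le_mul_of_nonneg_left hMpn (abs_nonneg s')
          linarith
        have hΔ5 : -(|s'| * Real.log (1 + (n:ℝ))) ≤ s' * Real.log (1 + ((n-p:ℕ):ℝ)) := by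
          have a1 : -s' * Real.log (1 + ((n-p:ℕ):ℝ)) ≤ |s'| * Real.log (1 + ((n-p:ℕ):ℝ)) :=
            mul_le_mul_of_nonneg_right (neg_le_abs s') hMq0
          have a2 : |s'| * Real.log (1 + ((n-p:ℕ):ℝ)) ≤ |s'| * Real.log (1 + (n:ℝ)) :=
            mul_le_mul_of_nonneg_left hMqn (abs_nonneg s')
          linarith
        have hΔ6 : s * Real.log (1 + (n:ℝ)) ≤ |s| * Real.log (1 + (n:ℝ)) :=
          mul_le_mul_of_nonneg_right (le_abs_self s) hMn0
        have hRho : ρ' * (p:ℝ) * Real.log 2 + ρ' * ((n-p:ℕ):ℝ) * Real.log 2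
            = ρ' * (n:ℝ) * Real.log 2 := by
          rw [← hcast]; ring
        rw [hδdef] at hΔ2
        have hLnσ : Real.log (n.factorial : ℝ) * σ
            = Real.log (n.choose p : ℝ) * σ
              + (Real.log (p.factorial : ℝ) * σ + Real.log ((n-p).factorial : ℝ) * σ) := by
          rw [hLn]; ring
        rw [htdef, hedef, hδdef]
        linarith [hLnσ, hΔ1, hΔ2, hΔ3, hΔ4, hΔ5, hΔ6, hRho, hnL2]
    _ ≤ C * (wgt σ' ρ' s' p * wgt σ' ρ' s' (n-p)) :=
        mul_le_mul_of_nonneg_right (hCg n)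
          (mul_nonneg (wgt_pos σ' ρ' s' p).le (wgt_pos σ' ρ' s' (n-p)).le)

private lemma aux_cauchy (f g : ℕ → ℝ) (hf : ∀ p, 0 ≤ f p) (hg : ∀ q, 0 ≤ g q) (M : ℕ) :
    ∑ n ∈ Finset.range M, ∑ p ∈ Finset.range (n+1), f p * g (n-p)
      ≤ (∑ p ∈ Finset.range M, f p) * (∑ q ∈ Finset.range M, g q) := by
  rw [Finset.sum_mul_sum, Finset.sum_sigma']
  rw [show (∑ p ∈ Finset.range M, ∑ q ∈ Finset.range M, f p * g q)
      = ∑ x ∈ Finset.range M ×ˢ Finset.range M, f x.1 * g x.2 by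
        rw [Finset.sum_product]]
  have himg : ∑ x ∈ ((Finset.range M).sigma fun n => Finset.range (n+1)), f x.2 * g (x.1 - x.2)
      = ∑ y ∈ ((Finset.range M).sigma fun n => Finset.range (n+1)).image
          (fun x : Σ _ : ℕ, ℕ => (x.2, x.1 - x.2)), f y.1 * g y.2 := by
    rw [Finset.sum_image]
    intro x hx y hy hxy
    simp only [Finset.mem_coe, Finset.mem_sigma, Finset.mem_range] at hx hy
    have h1 : x.2 = y.2 := congrArg Prod.fst hxy
    have h2 : x.1 - x.2 = y.1 - y.2 := congrArg Prod.snd hxy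
    have : x.1 = y.1 := by omega
    exact Sigma.ext this (by rw [h1])
  rw [himg]
  refine Finset.sum_le_sum_of_subset_of_nonneg ?_ (fun i _ _ => mul_nonneg (hf _) (hg _))
  intro y hy
  simp only [Finset.mem_image, Finset.mem_sigma, Finset.mem_range, Finset.mem_product] at hy ⊢
  obtain ⟨x, ⟨hx1, hx2⟩, rfl⟩ := hy
  omega

theorem graded_norm_estimate_mixed_sigma
    {E : ℕ → Type*} [∀ n, NormedAddCommGroup (E n)] [∀ n, InnerProductSpace ℝ (E n)]
    (mul : ∀ p q : ℕ, E p →ₗ[ℝ] E q →ₗ[ℝ] E (p + q))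
    (hmul : ∀ p q : ℕ, 1 ≤ p → 1 ≤ q → ∀ (x : E p) (y : E q), ‖mul p q x y‖ ≤ ‖x‖ * ‖y‖)
    (σ σ' ρ ρ' s s' : ℝ) (hσ : σ < σ') :
    ∃ γ : ℝ, 0 < γ ∧
      ∀ (a₀ : ℝ) (a : ∀ n, E n), (∃ N, ∀ n, N ≤ n → a n = 0) →
      ∀ (b₀ : ℝ) (b : ∀ n, E n), (∃ N, ∀ n, N ≤ n → b n = 0) →
        wnorm (wgt σ ρ s) (a₀ * b₀) (gradedMul mul a₀ a b₀ b) ≤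
          γ * wnorm (wgt σ' ρ' s') a₀ a * wnorm (wgt σ' ρ' s') b₀ b := by
  obtain ⟨C, hC1, hC⟩ := weight_bound σ σ' ρ ρ' s s' hσ
  have hC0 : (0:ℝ) < C := lt_of_lt_of_le one_pos hC1
  refine ⟨Real.sqrt C, Real.sqrt_pos.mpr hC0, ?_⟩
  rintro a₀ a ⟨Na, ha⟩ b₀ b ⟨Nb, hb⟩
  set M : ℕ := 2 * max Na Nb + 2 with hM
  have hsa : ∑' m : ℕ, wgt σ' ρ' s' (m+1) * ‖a (m+1)‖ ^ 2
      = ∑ m ∈ Finset.range M, wgt σ' ρ' s' (m+1) * ‖a (m+1)‖ ^ 2 := by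
    apply tsum_eq_sum
    intro m hm
    rw [Finset.mem_range, not_lt] at hm
    rw [ha (m+1) (by omega), norm_zero]
    ring
  have hsb : ∑' m : ℕ, wgt σ' ρ' s' (m+1) * ‖b (m+1)‖ ^ 2
      = ∑ m ∈ Finset.range M, wgt σ' ρ' s' (m+1) * ‖b (m+1)‖ ^ 2 := by
    apply tsum_eq_sum
    intro m hm
    rw [Finset.mem_range, not_lt] at hm
    rw [hb (m+1) (by omega), norm_zero]
    ring
  have hsc : ∑' m : ℕ, wgt σ ρ s (m+1) * ‖gradedMul mul a₀ a b₀ b (m+1)‖ ^ 2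
      = ∑ m ∈ Finset.range M, wgt σ ρ s (m+1) * ‖gradedMul mul a₀ a b₀ b (m+1)‖ ^ 2 := by
    apply tsum_eq_sum
    intro m hm
    rw [Finset.mem_range, not_lt] at hm
    rw [gradedMul_eq_zero mul a₀ a b₀ b Na Nb ha hb (by omega), norm_zero]
    ring
  have hwa : wnorm (wgt σ' ρ' s') a₀ a
      = Real.sqrt (∑ p ∈ Finset.range (M+1), wgt σ' ρ' s' p * (nseq a₀ a p) ^ 2) := by
    rw [wnorm, hsa]
    congr 1
    conv_rhs => rw [Finset.sum_range_succ']
    have h1 : ∀ m ∈ Finset.range M, wgt σ' ρ' s' (m+1) * (nseq a₀ a (m+1)) ^ 2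
        = wgt σ' ρ' s' (m+1) * ‖a (m+1)‖ ^ 2 := by
      intro m _
      simp [nseq]
    rw [Finset.sum_congr rfl h1]
    have h2 : wgt σ' ρ' s' 0 * (nseq a₀ a 0) ^ 2 = a₀ ^ 2 := by
      rw [wgt_zero]; simp [nseq, sq_abs]
    rw [h2]
    ring
  have hwb : wnorm (wgt σ' ρ' s') b₀ b
      = Real.sqrt (∑ p ∈ Finset.range (M+1), wgt σ' ρ' s' p * (nseq b₀ b p) ^ 2) := by
    rw [wnorm, hsb]
    congr 1
    conv_rhs => rw [Finset.sum_range_succ']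
    have h1 : ∀ m ∈ Finset.range M, wgt σ' ρ' s' (m+1) * (nseq b₀ b (m+1)) ^ 2
        = wgt σ' ρ' s' (m+1) * ‖b (m+1)‖ ^ 2 := by
      intro m _
      simp [nseq]
    rw [Finset.sum_congr rfl h1]
    have h2 : wgt σ' ρ' s' 0 * (nseq b₀ b 0) ^ 2 = b₀ ^ 2 := by
      rw [wgt_zero]; simp [nseq, sq_abs]
    rw [h2]
    ring
  have hwc : wnorm (wgt σ ρ s) (a₀ * b₀) (gradedMul mul a₀ a b₀ b)
      = Real.sqrt (∑ n ∈ Finset.range (M+1),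
          wgt σ ρ s n * (nseq (a₀*b₀) (gradedMul mul a₀ a b₀ b) n) ^ 2) := by
    rw [wnorm, hsc]
    congr 1
    conv_rhs => rw [Finset.sum_range_succ']
    have h1 : ∀ m ∈ Finset.range M,
        wgt σ ρ s (m+1) * (nseq (a₀*b₀) (gradedMul mul a₀ a b₀ b) (m+1)) ^ 2
        = wgt σ ρ s (m+1) * ‖gradedMul mul a₀ a b₀ b (m+1)‖ ^ 2 := by
      intro m _
      simp [nseq]
    rw [Finset.sum_congr rfl h1]
    have h2 : wgt σ ρ s 0 * (nseq (a₀*b₀) (gradedMul mul a₀ a b₀ b) 0) ^ 2 = (a₀*b₀) ^ 2 := by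
      rw [wgt_zero]; simp [nseq, sq_abs, mul_pow]
    rw [h2]
    ring
  have hX0 : 0 ≤ ∑ p ∈ Finset.range (M+1), wgt σ' ρ' s' p * (nseq a₀ a p) ^ 2 :=
    Finset.sum_nonneg fun p _ => mul_nonneg (wgt_pos σ' ρ' s' p).le (sq_nonneg _)
  have hTle : ∑ n ∈ Finset.range (M+1),
        wgt σ ρ s n * (nseq (a₀*b₀) (gradedMul mul a₀ a b₀ b) n) ^ 2
      ≤ C * ((∑ p ∈ Finset.range (M+1), wgt σ' ρ' s' p * (nseq a₀ a p) ^ 2)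
          * (∑ q ∈ Finset.range (M+1), wgt σ' ρ' s' q * (nseq b₀ b q) ^ 2)) := by
    calc ∑ n ∈ Finset.range (M+1),
          wgt σ ρ s n * (nseq (a₀*b₀) (gradedMul mul a₀ a b₀ b) n) ^ 2
        ≤ C * ∑ n ∈ Finset.range (M+1), ∑ p ∈ Finset.range (n+1),
            (wgt σ' ρ' s' p * (nseq a₀ a p) ^ 2)
              * (wgt σ' ρ' s' (n-p) * (nseq b₀ b (n-p)) ^ 2) := by
          rw [Finset.mul_sum]
          apply Finset.sum_le_sum
          intro n _
          rcases Nat.eq_zero_or_pos n with rfl | hn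
          · simp only [zero_add, Finset.sum_range_one, Nat.sub_self, Nat.sub_zero]
            rw [wgt_zero σ ρ s, wgt_zero σ' ρ' s']
            have e1 : nseq (a₀*b₀) (gradedMul mul a₀ a b₀ b) 0 = |a₀*b₀| := by simp [nseq]
            have e2 : nseq a₀ a 0 = |a₀| := by simp [nseq]
            have e3 : nseq b₀ b 0 = |b₀| := by simp [nseq]
            rw [e1, e2, e3, sq_abs, sq_abs, sq_abs]
            nlinarith [sq_nonneg (a₀*b₀), mul_nonneg (sq_nonneg a₀) (sq_nonneg b₀)]
          · have hn' : 1 ≤ n := hn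
            have hz := gradedMul_norm_le mul hmul a₀ a b₀ b n hn'
            have hnc : nseq (a₀*b₀) (gradedMul mul a₀ a b₀ b) n
                = ‖gradedMul mul a₀ a b₀ b n‖ := by
              simp [nseq, Nat.pos_iff_ne_zero.mp hn]
            rw [hnc]
            exact cs_step C hC0.le (wgt σ' ρ' s') (wgt_pos σ' ρ' s') (wgt σ ρ s n)
              (wgt_pos σ ρ s n).le n (nseq a₀ a) (nseq b₀ b) (nseq_nonneg _ _) (nseq_nonneg _ _)
              (fun p hp => hC n hn' p hp) _ (norm_nonneg _) hz
      _ ≤ C * ((∑ p ∈ Finset.range (M+1), wgt σ' ρ' s' p * (nseq a₀ a p) ^ 2)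
          * (∑ q ∈ Finset.range (M+1), wgt σ' ρ' s' q * (nseq b₀ b q) ^ 2)) := by
          apply mul_le_mul_of_nonneg_left _ hC0.le
          exact aux_cauchy (fun p => wgt σ' ρ' s' p * (nseq a₀ a p) ^ 2)
            (fun q => wgt σ' ρ' s' q * (nseq b₀ b q) ^ 2)
            (fun p => mul_nonneg (wgt_pos σ' ρ' s' p).le (sq_nonneg _))
            (fun q => mul_nonneg (wgt_pos σ' ρ' s' q).le (sq_nonneg _)) (M+1)
  rw [hwa, hwb, hwc]
  calc Real.sqrt (∑ n ∈ Finset.range (M+1),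
        wgt σ ρ s n * (nseq (a₀*b₀) (gradedMul mul a₀ a b₀ b) n) ^ 2)
      ≤ Real.sqrt (C * ((∑ p ∈ Finset.range (M+1), wgt σ' ρ' s' p * (nseq a₀ a p) ^ 2)
          * (∑ q ∈ Finset.range (M+1), wgt σ' ρ' s' q * (nseq b₀ b q) ^ 2))) :=
        Real.sqrt_le_sqrt hTle
    _ = Real.sqrt C * (Real.sqrt (∑ p ∈ Finset.range (M+1), wgt σ' ρ' s' p * (nseq a₀ a p) ^ 2)
          * Real.sqrt (∑ q ∈ Finset.range (M+1), wgt σ' ρ' s' q * (nseq b₀ b q) ^ 2)) := by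
        rw [Real.sqrt_mul hC0.le, Real.sqrt_mul hX0]
    _ = Real.sqrt C * Real.sqrt (∑ p ∈ Finset.range (M+1), wgt σ' ρ' s' p * (nseq a₀ a p) ^ 2)
          * Real.sqrt (∑ q ∈ Finset.range (M+1), wgt σ' ρ' s' q * (nseq b₀ b q) ^ 2) :=
        (mul_assoc _ _ _).symm
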